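/- In any Dyck^m algebra, for each 0 ≤ k ≤ m−1, the operations ≻^k := Σ_{i=0}^{k} *_i and ≺^k := Σ_{i=k+1}^{m} *_i define a dendriform algebra structure. -/

import Mathlib

def IsDyckAlgebra (K : Type*) [Field K] {D : Type*} [AddCommGroup D] [Module K D]
    (m : ℕ) (ops : ℕ → D → D → D) : Prop :=
  (∀ i, i ≤ m → ∀ x x' y : D, ops i (x + x') y = ops i x y + ops i x' y) ∧
  (∀ i, i ≤ m → ∀ x y y' : D, ops i x (y + y') = ops i x y + ops i x y') ∧
  (∀ i, i ≤ m → ∀ (a : K) (x y : D), ops i (a • x) y = a • ops i x y) ∧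
  (∀ i, i ≤ m → ∀ (a : K) (x y : D), ops i x (a • y) = a • ops i x y) ∧
  (∀ i j, i < j → j ≤ m → ∀ x y z : D, ops i x (ops j y z) = ops j (ops i x y) z) ∧
  (∀ i, i ≤ m → ∀ x y z : D,
      ∑ j ∈ Finset.range (i + 1), ops i x (ops j y z)
        = ∑ k ∈ Finset.Icc i m, ops i (ops k x y) z)

/-- `≻^k := Σ_{i=0}^k *_i`. -/
def succOp {D : Type*} [AddCommMonoid D] (k : ℕ) (ops : ℕ → D → D → D) :
    D → D → D :=
  fun x y => ∑ i ∈ Finset.range (k + 1), ops i x y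

/-- `≺^k := Σ_{i=k+1}^m *_i`. -/
def precOp {D : Type*} [AddCommMonoid D] (k m : ℕ) (ops : ℕ → D → D → D) :
    D → D → D :=
  fun x y => ∑ i ∈ Finset.Icc (k + 1) m, ops i x y

/-- In any `Dyck^m` algebra, for each `0 ≤ k ≤ m−1`, the operations
`≻^k` and `≺^k` define a dendriform algebra structure. -/
theorem dyck_dendriform_pairs {K : Type*} [Field K] {D : Type*} [AddCommGroup D]
    [Module K D] (m : ℕ) (ops : ℕ → D → D → D)
    (halg : IsDyckAlgebra K m ops) (k : ℕ) (hk : k + 1 ≤ m) :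
    (∀ x y z : D, succOp k ops x (succOp k ops y z)
        = succOp k ops (succOp k ops x y + precOp k m ops x y) z)
    ∧ (∀ x y z : D, succOp k ops x (precOp k m ops y z)
        = precOp k m ops (succOp k ops x y) z)
    ∧ (∀ x y z : D, precOp k m ops x (succOp k ops y z + precOp k m ops y z)
        = precOp k m ops (precOp k m ops x y) z) := by
  obtain ⟨hal, har, hsl, hsr, hassoc, hrel⟩ := halg
  have hzl : ∀ i, i ≤ m → ∀ y : D, ops i 0 y = 0 := by
    intro i hi y
    have := hsl i hi 0 0 y
    simpa using this
  have hzr : ∀ i, i ≤ m → ∀ x : D, ops i x 0 = 0 := by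
    intro i hi x
    have := hsr i hi 0 x 0
    simpa using this
  have hsuml : ∀ i, i ≤ m → ∀ (s : Finset ℕ) (f : ℕ → D) (y : D),
      ops i (∑ j ∈ s, f j) y = ∑ j ∈ s, ops i (f j) y := by
    intro i hi s f y
    induction s using Finset.induction_on with
    | empty => simpa using hzl i hi y
    | insert _ _ h ih => rw [Finset.sum_insert h, Finset.sum_insert h, hal i hi, ih]
  have hsumr : ∀ i, i ≤ m → ∀ (x : D) (s : Finset ℕ) (f : ℕ → D),
      ops i x (∑ j ∈ s, f j) = ∑ j ∈ s, ops i x (f j) := by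
    intro i hi x s f
    induction s using Finset.induction_on with
    | empty => simpa using hzr i hi x
    | insert _ _ h ih => rw [Finset.sum_insert h, Finset.sum_insert h, har i hi, ih]
  have hkm : ∀ i ∈ Finset.range (k + 1), i ≤ m := by
    intro i hi; simp only [Finset.mem_range] at hi; omega
  have hIm : ∀ i ∈ Finset.Icc (k + 1) m, i ≤ m := by
    intro i hi; simp only [Finset.mem_Icc] at hi; omega
  refine ⟨?_, ?_, ?_⟩
  · -- x ≻ (y ≻ z) = (x ≻ y + x ≺ y) ≻ z
    intro x y z
    have hfull : succOp k ops x y + precOp k m ops x y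
        = ∑ l ∈ Finset.range (m + 1), ops l x y := by
      unfold succOp precOp
      rw [← Finset.Ico_add_one_right_eq_Icc (k + 1) m]
      exact Finset.sum_range_add_sum_Ico _ (by omega)
    rw [hfull]
    unfold succOp
    have hL : ∑ i ∈ Finset.range (k + 1), ops i x (∑ j ∈ Finset.range (k + 1), ops j y z)
        = (∑ i ∈ Finset.range (k + 1), ∑ l ∈ Finset.Icc i m, ops i (ops l x y) z)
          + ∑ i ∈ Finset.range (k + 1), ∑ j ∈ Finset.Ico (i + 1) (k + 1),
              ops j (ops i x y) z := by
      rw [← Finset.sum_add_distrib]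
      refine Finset.sum_congr rfl fun i hi => ?_
      have him : i ≤ m := hkm i hi
      have hik : i < k + 1 := Finset.mem_range.mp hi
      rw [hsumr i him, ← Finset.sum_range_add_sum_Ico
        (fun j => ops i x (ops j y z)) (by omega : i + 1 ≤ k + 1)]
      rw [hrel i him x y z]
      congr 1
      refine Finset.sum_congr rfl fun j hj => ?_
      simp only [Finset.mem_Ico] at hj
      exact hassoc i j (by omega) (by omega) x y z
    have hR : ∑ i ∈ Finset.range (k + 1), ops i (∑ l ∈ Finset.range (m + 1), ops l x y) z
        = (∑ i ∈ Finset.range (k + 1), ∑ l ∈ Finset.Icc i m, ops i (ops l x y) z)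
          + ∑ i ∈ Finset.range (k + 1), ∑ l ∈ Finset.range i, ops i (ops l x y) z := by
      rw [← Finset.sum_add_distrib]
      refine Finset.sum_congr rfl fun i hi => ?_
      have him : i ≤ m := hkm i hi
      rw [hsuml i him, ← Finset.sum_range_add_sum_Ico
        (fun l => ops i (ops l x y) z) (by omega : i ≤ m + 1),
        Finset.Ico_add_one_right_eq_Icc]
      exact add_comm _ _
    rw [hL, hR]
    congr 1
    exact Finset.sum_comm' (fun i j => by
      simp only [Finset.mem_range, Finset.mem_Ico]
      omega)
  · -- x ≻ (y ≺ z) = (x ≻ y) ≺ z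
    intro x y z
    unfold succOp precOp
    have : ∑ i ∈ Finset.range (k + 1),
          ops i x (∑ j ∈ Finset.Icc (k + 1) m, ops j y z)
        = ∑ i ∈ Finset.range (k + 1), ∑ j ∈ Finset.Icc (k + 1) m,
            ops j (ops i x y) z := by
      refine Finset.sum_congr rfl fun i hi => ?_
      rw [hsumr i (hkm i hi)]
      refine Finset.sum_congr rfl fun j hj => ?_
      have := Finset.mem_range.mp hi
      have := Finset.mem_Icc.mp hj
      exact hassoc i j (by omega) (by omega) x y z
    rw [this, Finset.sum_comm]
    refine Finset.sum_congr rfl fun j hj => ?_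
    rw [hsuml j (hIm j hj)]
  · -- x ≺ (y ≻ z + y ≺ z) = (x ≺ y) ≺ z
    intro x y z
    have hfull : succOp k ops y z + precOp k m ops y z
        = ∑ j ∈ Finset.range (m + 1), ops j y z := by
      unfold succOp precOp
      rw [← Finset.Ico_add_one_right_eq_Icc (k + 1) m]
      exact Finset.sum_range_add_sum_Ico _ (by omega)
    rw [hfull]
    unfold precOp
    have hL : ∑ i ∈ Finset.Icc (k + 1) m, ops i x (∑ j ∈ Finset.range (m + 1), ops j y z)
        = (∑ i ∈ Finset.Icc (k + 1) m, ∑ l ∈ Finset.Icc i m, ops i (ops l x y) z)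
          + ∑ i ∈ Finset.Icc (k + 1) m, ∑ j ∈ Finset.Ico (i + 1) (m + 1),
              ops j (ops i x y) z := by
      rw [← Finset.sum_add_distrib]
      refine Finset.sum_congr rfl fun i hi => ?_
      have him : i ≤ m := hIm i hi
      rw [hsumr i him, ← Finset.sum_range_add_sum_Ico
        (fun j => ops i x (ops j y z)) (by omega : i + 1 ≤ m + 1)]
      rw [hrel i him x y z]
      congr 1
      refine Finset.sum_congr rfl fun j hj => ?_
      simp only [Finset.mem_Ico] at hj
      exact hassoc i j (by omega) (by omega) x y z
    have hR : ∑ i ∈ Finset.Icc (k + 1) m,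
          ops i (∑ l ∈ Finset.Icc (k + 1) m, ops l x y) z
        = (∑ i ∈ Finset.Icc (k + 1) m, ∑ l ∈ Finset.Icc i m, ops i (ops l x y) z)
          + ∑ i ∈ Finset.Icc (k + 1) m, ∑ l ∈ Finset.Ico (k + 1) i,
              ops i (ops l x y) z := by
      rw [← Finset.sum_add_distrib]
      refine Finset.sum_congr rfl fun i hi => ?_
      have hi' := Finset.mem_Icc.mp hi
      rw [hsuml i hi'.2, ← Finset.Ico_add_one_right_eq_Icc (k + 1) m,
        ← Finset.sum_Ico_consecutive (fun l => ops i (ops l x y) z)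
          (by omega : k + 1 ≤ i) (by omega : i ≤ m + 1),
        Finset.Ico_add_one_right_eq_Icc]
      exact add_comm _ _
    rw [hL, hR]
    congr 1
    exact Finset.sum_comm' (fun i j => by
      simp only [Finset.mem_Icc, Finset.mem_Ico]
      omega)
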